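/- On the four-point filtered space with Ω = {1,2,3,4}, F_0 trivial, F_1 = σ({1,2},{3,4}), F_2 = 2^Ω, P = (1/100, 9/100, 9/100, 81/100), and λ = 1/50, the representing set Q_λ = {Q ≪ P : dQ/dP ≤ 50} is not m-stable: for Q¹ = (1/2, 1/2, 0, 0) ∈ Q_λ and Q² = (1/2, 0, 1/2, 0) ∈ Q_λ, the time-1 pasting Q̃ with dQ̃/dP = (E[dQ¹/dP | F_1] / E[dQ²/dP | F_1]) · dQ²/dP equals the point mass (1,0,0,0), which satisfies Q̃({1}) = 1 > 1/2 and hence Q̃ ∉ Q_λ. -/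
import Mathlib


/-!
Statement 17: on the four-point space `Ω = {1,2,3,4}` (represented by `Fin 4`, point `i+1`
represented by `i`) with `F_1 = σ({1,2},{3,4})` and `P = (1/100, 9/100, 9/100, 81/100)`,
the representing set `Q_λ` (`λ = 1/50`) is not m-stable: the time-1 pasting of
`Q¹ = (1/2, 1/2, 0, 0)` and `Q² = (1/2, 0, 1/2, 0)`, with density
`dQ̃/dP = (E[dQ¹/dP|F_1]/E[dQ²/dP|F_1])·dQ²/dP`, equals the point mass `(1,0,0,0)`,
whose first mass `1` exceeds the bound `1/2 = 50·P({1})`, so `Q̃ ∉ Q_λ`.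
Measures `Q ≪ P` are identified with the quadruples of their masses, and
`E[dQ/dP|F_1] = Q(A)/P(A)` on each time-1 atom `A`. -/

open Finset

/-- The reference probabilities `P = (1/100, 9/100, 9/100, 81/100)`. -/
noncomputable def pRef : Fin 4 → ℝ := ![1/100, 9/100, 9/100, 81/100]

/-- The representing set `Q_λ`, `λ = 1/50`: densities bounded by `1/λ = 50`. -/
def Qlam : Set (Fin 4 → ℝ) :=
  {q | (∀ i, 0 ≤ q i) ∧ (∑ i, q i) = 1 ∧ ∀ i, q i ≤ 50 * pRef i}

/-- The time-1 atom containing `ω`: `{1,2}` or `{3,4}`. -/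
def atom1 (ω : Fin 4) : Finset (Fin 4) := if (ω : ℕ) < 2 then {0, 1} else {2, 3}

/-- `Q¹ = (1/2, 1/2, 0, 0)`. -/
noncomputable def Q1 : Fin 4 → ℝ := ![1/2, 1/2, 0, 0]

/-- `Q² = (1/2, 0, 1/2, 0)`. -/
noncomputable def Q2 : Fin 4 → ℝ := ![1/2, 0, 1/2, 0]

/-- The time-1 pasting `Q̃` of `Q¹` and `Q²`:
`dQ̃/dP = (E[dQ¹/dP|F_1]/E[dQ²/dP|F_1])·dQ²/dP`, written on the time-1 atoms as
`Q̃(ω) = (Q¹(A_ω)/Q²(A_ω))·Q²(ω)`. -/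
noncomputable def Qpaste : Fin 4 → ℝ := fun ω =>
  ((∑ i ∈ atom1 ω, Q1 i) / (∑ i ∈ atom1 ω, Q2 i)) * Q2 ω

/-- `Q¹, Q² ∈ Q_λ`, the time-1 pasting equals the point mass
`(1,0,0,0)`, its first mass is `1 > 1/2`, and hence it is not in `Q_λ`; so `Q_λ` is not
m-stable. -/
theorem Qlam_not_mstable :
    Q1 ∈ Qlam ∧ Q2 ∈ Qlam ∧
    Qpaste = ![1, 0, 0, 0] ∧
    Qpaste 0 = 1 ∧ (1 : ℝ) > 1/2 ∧
    Qpaste ∉ Qlam := by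

  have hpaste : Qpaste = ![1, 0, 0, 0] := by
    funext ω
    fin_cases ω <;>
      simp [Qpaste, atom1, Q1, Q2, Fin.sum_univ_succ] <;> norm_num
  refine ⟨⟨?_, ?_, ?_⟩, ⟨?_, ?_, ?_⟩, hpaste, ?_, by norm_num, ?_⟩
  · intro i; fin_cases i <;> norm_num [Q1]
  · simp [Q1, Fin.sum_univ_succ]; norm_num
  · intro i; fin_cases i <;> norm_num [Q1, pRef]
  · intro i; fin_cases i <;> norm_num [Q2]
  · simp [Q2, Fin.sum_univ_succ]; norm_num
  · intro i; fin_cases i <;> norm_num [Q2, pRef]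
  · rw [hpaste]; norm_num
  · rw [hpaste]; rintro ⟨-, -, h⟩
    have := h 0
    norm_num [pRef] at this
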